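/- Assume non(𝒩) = 𝔠. With the notation of the previous construction (f_β = χ_{V ∪ {x_γ : γ ≤ β}} on [0,1], where {x_β : β<𝔠} enumerates [0,½] and V is a null set disjoint from [0,½]), the 𝔠-sequence (f_β)_{β<𝔠} of measurable functions satisfies: each f_β ≥ 0 a.e., the pointwise limit inferior function liminf_β f_β = χ_{V∪[0,½]} is integrable, and ∫_{[0,1]} liminf_β f_β dλ = ½ > 0 = liminf_β ∫_{[0,1]} f_β dλ; that is, Fatou's Lemma fails for this 𝔠-sequence. -/

import Mathlib

open MeasureTheory Cardinal Ordinal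

/-- `non(𝒩)`: the least cardinality of a non-null subset of `[0,1]`. -/
noncomputable def nonNull : Cardinal :=
  sInf {c : Cardinal | ∃ S : Set ℝ, S ⊆ Set.Icc 0 1 ∧ volume S ≠ 0 ∧ #S = c}

universe u in
lemma card_small_aux {β : Ordinal.{u}} (hβ : β < Cardinal.continuum.ord) (x : Ordinal.{u} → ℝ) :
    #(x '' {γ | γ ≤ β}) < Cardinal.continuum := by
  have hlim : Order.IsSuccLimit (Cardinal.continuum.ord) :=
    Cardinal.isSuccLimit_ord Cardinal.aleph0_le_continuum
  have h1 : β + 1 < Cardinal.continuum.ord := by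
    rw [Ordinal.add_one_eq_succ]
    exact hlim.succ_lt hβ
  have hcard : (β + 1).card < Cardinal.continuum := (Cardinal.lt_ord).mp h1
  have hIic : ({γ | γ ≤ β} : Set Ordinal) = Set.Iio (β + 1) := by
    rw [Ordinal.add_one_eq_succ, Order.Iio_succ]; rfl
  have h2 : #({γ | γ ≤ β} : Set Ordinal) = Cardinal.lift.{u+1} (β + 1).card := by
    rw [hIic, Ordinal.mk_Iio_ordinal]
  have h3 := Cardinal.mk_image_le_lift (f := x) (s := {γ | γ ≤ β})
  rw [h2, Cardinal.lift_lift] at h3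
  have h5 : Cardinal.lift.{u+1} (β + 1).card < Cardinal.lift.{u+1} Cardinal.continuum :=
    Cardinal.lift_lt.mpr hcard
  rw [Cardinal.lift_continuum] at h5
  have h4 : Cardinal.lift.{u+1} #(x '' {γ | γ ≤ β})
      < Cardinal.lift.{u+1} Cardinal.continuum.{0} := by
    rw [Cardinal.lift_continuum]
    exact h3.trans_lt h5
  exact Cardinal.lift_lt.mp h4

lemma null_of_small (hnon : nonNull = Cardinal.continuum) {S : Set ℝ}
    (hS : S ⊆ Set.Icc 0 1) (h : #S < Cardinal.continuum) : volume S = 0 := by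
  by_contra h0
  have hle : nonNull ≤ #S := csInf_le' ⟨S, hS, h0, rfl⟩
  rw [hnon] at hle
  exact absurd (hle.trans_lt h) (lt_irrefl _)

/-- Assuming `non(𝒩) = 𝔠`: with `f_β = χ_{V ∪ {x_γ : γ ≤ β}}` on `[0,1]`, where
`{x_β : β < 𝔠}` enumerates `[0,½]` and `V` is a null set disjoint from `[0,½]`, the
`𝔠`-sequence `(f_β)` of nonnegative measurable functions converges pointwise everywhere
to its liminf `χ_{V ∪ [0,½]}`, which is integrable with integral `½ > 0`, while every
integral `∫ f_β dλ` equals `0`; i.e. Fatou's Lemma fails for this `𝔠`-sequence. -/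
theorem stmt_10 (hnon : nonNull = Cardinal.continuum)
    (x : Ordinal → ℝ)
    (hmem : ∀ α < Cardinal.continuum.ord, x α ∈ Set.Icc (0:ℝ) (1/2))
    (hinj : ∀ α β, α < Cardinal.continuum.ord → β < Cardinal.continuum.ord →
      x α = x β → α = β)
    (hsurj : ∀ y ∈ Set.Icc (0:ℝ) (1/2), ∃ α < Cardinal.continuum.ord, x α = y)
    (V : Set ℝ) (hVdisj : Disjoint V (Set.Icc (0:ℝ) (1/2))) (hV0 : volume V = 0) :
    (∀ β < Cardinal.continuum.ord,
      AEMeasurable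
        (Set.indicator (V ∪ x '' {γ | γ ≤ β}) (fun _ => (1:ℝ)))
        (volume : Measure ℝ)) ∧
    (∀ β < Cardinal.continuum.ord,
      ∀ᵐ t ∂(volume : Measure ℝ),
        0 ≤ Set.indicator (V ∪ x '' {γ | γ ≤ β}) (fun _ => (1:ℝ)) t) ∧
    (∀ t ∈ Set.Icc (0:ℝ) 1, ∀ ε > (0:ℝ), ∃ β₀ < Cardinal.continuum.ord,
      ∀ β, β₀ < β → β < Cardinal.continuum.ord →
        |Set.indicator (V ∪ x '' {γ | γ ≤ β}) (fun _ => (1:ℝ)) t -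
          Set.indicator (V ∪ Set.Icc (0:ℝ) (1/2)) (fun _ => (1:ℝ)) t| < ε) ∧
    IntegrableOn (Set.indicator (V ∪ Set.Icc (0:ℝ) (1/2)) (fun _ => (1:ℝ)))
      (Set.Icc (0:ℝ) 1) volume ∧
    (∫ t in Set.Icc (0:ℝ) 1,
        Set.indicator (V ∪ Set.Icc (0:ℝ) (1/2)) (fun _ => (1:ℝ)) t = 1/2) ∧
    (∀ β < Cardinal.continuum.ord,
      ∫ t in Set.Icc (0:ℝ) 1,
        Set.indicator (V ∪ x '' {γ | γ ≤ β}) (fun _ => (1:ℝ)) t = 0) ∧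
    (0:ℝ) < 1/2 := by
  -- the image sets are null
  have himg : ∀ β < Cardinal.continuum.ord, volume (x '' {γ | γ ≤ β}) = 0 := by
    intro β hβ
    apply null_of_small hnon
    · rintro y ⟨γ, hγ, rfl⟩
      have := hmem γ (lt_of_le_of_lt hγ hβ)
      exact ⟨this.1, this.2.trans (by norm_num)⟩
    · exact card_small_aux hβ x
  have hnull : ∀ β < Cardinal.continuum.ord, volume (V ∪ x '' {γ | γ ≤ β}) = 0 := by
    intro β hβ
    exact measure_union_null hV0 (himg β hβ)
  -- fβ is a.e. zero
  have hfzero : ∀ β < Cardinal.continuum.ord,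
      (Set.indicator (V ∪ x '' {γ | γ ≤ β}) (fun _ => (1:ℝ)))
        =ᵐ[(volume : Measure ℝ)] (fun _ => (0:ℝ)) := by
    intro β hβ
    have := (MeasureTheory.measure_eq_zero_iff_ae_notMem (μ := (volume : Measure ℝ))).mp
      (hnull β hβ)
    filter_upwards [this] with t ht
    simp [Set.indicator_of_notMem ht]
  -- the limit indicator is a.e. equal to the indicator of Icc 0 (1/2)
  have hVae : ∀ᵐ t ∂(volume : Measure ℝ), t ∉ V :=
    (MeasureTheory.measure_eq_zero_iff_ae_notMem).mp hV0
  have hlimae : (Set.indicator (V ∪ Set.Icc (0:ℝ) (1/2)) (fun _ => (1:ℝ)))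
      =ᵐ[(volume : Measure ℝ)]
      (Set.indicator (Set.Icc (0:ℝ) (1/2)) (fun _ => (1:ℝ))) := by
    filter_upwards [hVae] with t ht
    by_cases h : t ∈ Set.Icc (0:ℝ) (1/2)
    · rw [Set.indicator_of_mem (Set.mem_union_right _ h), Set.indicator_of_mem h]
    · rw [Set.indicator_of_notMem (fun hc => hc.elim ht h), Set.indicator_of_notMem h]
  refine ⟨?_, ?_, ?_, ?_, ?_, ?_, by norm_num⟩
  · -- AEMeasurable
    intro β hβ
    exact (aemeasurable_const (b := (0:ℝ))).congr (hfzero β hβ).symm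
  · -- nonneg
    intro β hβ
    exact Filter.Eventually.of_forall fun t =>
      Set.indicator_nonneg (fun _ _ => zero_le_one) t
  · -- pointwise convergence
    intro t ht ε hε
    have hord0 : (0 : Ordinal) < Cardinal.continuum.ord := by
      rw [Cardinal.lt_ord]
      simpa using Cardinal.continuum_pos
    by_cases htV : t ∈ V
    · refine ⟨0, hord0, fun β hβ0 hβ => ?_⟩
      rw [Set.indicator_of_mem (Set.mem_union_left _ htV),
        Set.indicator_of_mem (Set.mem_union_left _ htV)]
      simpa using hε
    · by_cases htI : t ∈ Set.Icc (0:ℝ) (1/2)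
      · obtain ⟨α, hα, hxα⟩ := hsurj t htI
        refine ⟨α, hα, fun β hβ0 hβ => ?_⟩
        have hmem1 : t ∈ V ∪ x '' {γ | γ ≤ β} :=
          Set.mem_union_right _ ⟨α, le_of_lt hβ0, hxα⟩
        rw [Set.indicator_of_mem hmem1,
          Set.indicator_of_mem (Set.mem_union_right _ htI)]
        simpa using hε
      · refine ⟨0, hord0, fun β hβ0 hβ => ?_⟩
        have hmem1 : t ∉ V ∪ x '' {γ | γ ≤ β} := by
          rintro (h | ⟨γ, hγ, rfl⟩)
          · exact htV h
          · exact htI (hmem γ (lt_of_le_of_lt hγ hβ))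
        rw [Set.indicator_of_notMem hmem1,
          Set.indicator_of_notMem (fun hc => hc.elim htV htI)]
        simpa using hε
  · -- integrability
    have hint : IntegrableOn (Set.indicator (Set.Icc (0:ℝ) (1/2)) (fun _ => (1:ℝ)))
        (Set.Icc (0:ℝ) 1) volume := by
      apply Integrable.indicator
      · exact integrableOn_const (by simp [Real.volume_Icc])
      · exact measurableSet_Icc
    exact hint.congr ((Filter.EventuallyEq.symm hlimae).filter_mono
      (MeasureTheory.ae_mono Measure.restrict_le_self))
  · -- integral of the limit
    have h1 : (∫ t in Set.Icc (0:ℝ) 1,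
        Set.indicator (V ∪ Set.Icc (0:ℝ) (1/2)) (fun _ => (1:ℝ)) t)
        = ∫ t in Set.Icc (0:ℝ) 1,
          Set.indicator (Set.Icc (0:ℝ) (1/2)) (fun _ => (1:ℝ)) t :=
      integral_congr_ae (hlimae.filter_mono (MeasureTheory.ae_mono Measure.restrict_le_self))
    rw [h1, MeasureTheory.setIntegral_indicator measurableSet_Icc]
    rw [Set.Icc_inter_Icc]
    simp only [MeasureTheory.integral_const, _root_.smul_eq_mul, mul_one]
    rw [measureReal_restrict_apply_univ]
    norm_num [Measure.real, Real.volume_Icc]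
  · -- integrals of fβ are 0
    intro β hβ
    have := integral_congr_ae ((hfzero β hβ).filter_mono
      (MeasureTheory.ae_mono (Measure.restrict_le_self (s := Set.Icc (0:ℝ) 1))))
    rw [this, integral_zero]
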